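/- arXiv:1411.7294 — 2 statements merged into one kernel-verified Lean document; each statement's English description precedes it below -/
import Mathlib

section
/- For every integer m ≥ 2 and every real q > 1, the sum over n ≥ 2 of n^(-1) · (log m / log n)^(1/q) · 1/(log m + log n) is at most π/sin(π/q). -/
open Real Set MeasureTheory

lemma beta_real {s : ℝ} (hs0 : 0 < s) (hs1 : s < 1) :
    ∫ x in (0:ℝ)..1, x ^ (-s) * (1-x) ^ (s-1) = π / Real.sin (π * s) := by
  have hu : 0 < Complex.re ((1 - s : ℝ) : ℂ) := by simpa using by linarith
  have hv : 0 < Complex.re ((s : ℝ) : ℂ) := by simpa using hs0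
  have key := Complex.Gamma_mul_Gamma_eq_betaIntegral hu hv
  have hsum : ((1 - s : ℝ) : ℂ) + ((s : ℝ) : ℂ) = 1 := by push_cast; ring
  rw [hsum, Complex.Gamma_one, one_mul] at key
  have hbeta : Complex.betaIntegral ((1 - s : ℝ) : ℂ) ((s : ℝ) : ℂ)
      = ((∫ x in (0:ℝ)..1, x ^ (-s) * (1-x) ^ (s-1) : ℝ) : ℂ) := by
    rw [Complex.betaIntegral, ← intervalIntegral.integral_ofReal]
    apply intervalIntegral.integral_congr
    intro x hx
    rw [uIcc_of_le zero_le_one] at hx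
    have hx0 : (0:ℝ) ≤ x := hx.1
    have hx1 : (0:ℝ) ≤ 1 - x := by linarith [hx.2]
    have e1 : ((x:ℂ)) ^ (((1 - s : ℝ) : ℂ) - 1) = ((x ^ (-s) : ℝ) : ℂ) := by
      rw [Complex.ofReal_cpow hx0]
      norm_num
    have e2 : ((1:ℂ) - (x:ℂ)) ^ (((s : ℝ) : ℂ) - 1) = (((1 - x) ^ (s-1) : ℝ) : ℂ) := by
      rw [Complex.ofReal_cpow hx1]
      push_cast
      ring_nf
    simp only
    rw [e1, e2]
    push_cast
    ring
  rw [hbeta, Complex.Gamma_ofReal, Complex.Gamma_ofReal] at key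
  have : (Real.Gamma (1 - s) * Real.Gamma s : ℝ) = ∫ x in (0:ℝ)..1, x ^ (-s) * (1-x) ^ (s-1) := by
    exact_mod_cast key
  rw [← this, mul_comm]
  exact Real.Gamma_mul_Gamma_one_sub s


lemma h_integrable {s : ℝ} (hs0 : 0 < s) (hs1 : s < 1) :
    IntegrableOn (fun x : ℝ => x ^ (-s) * (1+x)⁻¹) (Ioi 0) := by
  have hmeas : Measurable (fun x : ℝ => x ^ (-s) * (1+x)⁻¹) := by fun_prop
  have h1 : IntegrableOn (fun x : ℝ => x ^ (-s) * (1+x)⁻¹) (Ioc 0 1) := by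
    have hrpow : IntegrableOn (fun x : ℝ => x ^ (-s)) (Ioc 0 1) := by
      have := intervalIntegral.intervalIntegrable_rpow' (a := 0) (b := 1) (r := -s)
        (by linarith)
      rwa [intervalIntegrable_iff_integrableOn_Ioc_of_le zero_le_one] at this
    refine hrpow.mono' (hmeas.aestronglyMeasurable.restrict) ?_
    filter_upwards [ae_restrict_mem measurableSet_Ioc] with x hx
    have hx0 : 0 < x := hx.1
    rw [norm_mul, norm_of_nonneg (rpow_nonneg hx0.le _)]
    have : ‖(1+x)⁻¹‖ ≤ 1 := by
      rw [norm_inv, Real.norm_of_nonneg (by linarith)]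
      rw [inv_le_one_iff₀]; right; linarith
    calc x ^ (-s) * ‖(1+x)⁻¹‖ ≤ x ^ (-s) * 1 :=
          mul_le_mul_of_nonneg_left this (rpow_nonneg hx0.le _)
      _ = x ^ (-s) := mul_one _
  have h2 : IntegrableOn (fun x : ℝ => x ^ (-s) * (1+x)⁻¹) (Ioi 1) := by
    have hrpow : IntegrableOn (fun x : ℝ => x ^ (-s - 1)) (Ioi 1) :=
      integrableOn_Ioi_rpow_of_lt (by linarith) one_pos
    refine hrpow.mono' (hmeas.aestronglyMeasurable.restrict) ?_
    filter_upwards [ae_restrict_mem measurableSet_Ioi] with x hx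
    have hx1 : (1:ℝ) < x := hx
    have hx0 : (0:ℝ) < x := by linarith
    rw [norm_mul, norm_of_nonneg (rpow_nonneg hx0.le _), norm_inv,
      Real.norm_of_nonneg (by linarith)]
    have : (1+x)⁻¹ ≤ x⁻¹ := by
      apply inv_anti₀ hx0; linarith
    calc x ^ (-s) * (1+x)⁻¹ ≤ x ^ (-s) * x⁻¹ :=
          mul_le_mul_of_nonneg_left this (rpow_nonneg hx0.le _)
      _ = x ^ (-s - 1) := by
          rw [Real.rpow_sub hx0, Real.rpow_one]; ring
  have : Ioc (0:ℝ) 1 ∪ Ioi 1 = Ioi 0 := Ioc_union_Ioi_eq_Ioi zero_le_one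
  rw [← this]
  exact h1.union h2

lemma h_integral {s : ℝ} (hs0 : 0 < s) (hs1 : s < 1) :
    ∫ x in Ioi (0:ℝ), x ^ (-s) * (1+x)⁻¹ = π / Real.sin (π * s) := by
  set f : ℝ → ℝ := fun u => u / (1 - u) with hf
  have himg : f '' Ioo 0 1 = Ioi 0 := by
    ext y
    constructor
    · rintro ⟨u, ⟨hu0, hu1⟩, rfl⟩
      exact div_pos hu0 (by linarith)
    · intro hy
      have hy0 : (0:ℝ) < y := hy
      refine ⟨y / (1 + y), ⟨div_pos hy0 (by linarith), ?_⟩, ?_⟩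
      · rw [div_lt_one (by linarith)]; linarith
      · simp only [hf]
        field_simp
        ring
  have hderiv : ∀ x ∈ Ioo (0:ℝ) 1, HasDerivWithinAt f (((1 - x) ^ 2)⁻¹) (Ioo 0 1) x := by
    intro x hx
    have hne : (1:ℝ) - x ≠ 0 := by have := hx.2; intro h; nlinarith
    have : HasDerivAt f ((1 * (1 - x) - x * (-1)) / (1 - x) ^ 2) x := by
      exact (hasDerivAt_id x).div ((hasDerivAt_id x).const_sub 1) hne
    have h2 : (1 * (1 - x) - x * (-1)) / (1 - x) ^ 2 = ((1 - x) ^ 2)⁻¹ := by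
      field_simp
      ring
    rw [h2] at this
    exact this.hasDerivWithinAt
  have hinj : InjOn f (Ioo 0 1) := by
    intro u hu v hv huv
    have h1 : (1:ℝ) - u ≠ 0 := by have := hu.2; intro h; nlinarith
    have h2 : (1:ℝ) - v ≠ 0 := by have := hv.2; intro h; nlinarith
    simp only [hf] at huv
    rw [div_eq_div_iff h1 h2] at huv
    nlinarith [huv]
  have key := MeasureTheory.integral_image_eq_integral_abs_deriv_smul measurableSet_Ioo
    hderiv hinj (fun x : ℝ => x ^ (-s) * (1+x)⁻¹)
  rw [himg] at key
  rw [key]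
  have congr1 : ∫ x in Ioo (0:ℝ) 1, |((1 - x) ^ 2)⁻¹| • ((f x) ^ (-s) * (1 + f x)⁻¹)
      = ∫ x in Ioo (0:ℝ) 1, x ^ (-s) * (1-x) ^ (s-1) := by
    apply setIntegral_congr_fun measurableSet_Ioo
    intro x hx
    have hx0 : 0 < x := hx.1
    have h1x : 0 < 1 - x := by linarith [hx.2]
    have e2 : 1 + f x = (1 - x)⁻¹ := by
      simp only [hf]; field_simp; ring
    have e1 : (f x) ^ (-s) = x ^ (-s) * (1 - x) ^ s := by
      simp only [hf]
      rw [Real.div_rpow hx0.le h1x.le, Real.rpow_neg hx0.le, Real.rpow_neg h1x.le]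
      field_simp
    have e3 : (1 - x) ^ (s - 1) = (1 - x) ^ s / (1 - x) := by
      rw [Real.rpow_sub h1x, Real.rpow_one]
    simp only [smul_eq_mul, e2, e1, e3, abs_of_pos (by positivity : (0:ℝ) < ((1 - x) ^ 2)⁻¹),
      inv_inv]
    field_simp
  rw [congr1, ← MeasureTheory.integral_Ioc_eq_integral_Ioo,
    ← intervalIntegral.integral_of_le zero_le_one]
  exact beta_real hs0 hs1


theorem stmt_2 (m : ℕ) (hm : 2 ≤ m) (q : ℝ) (hq : 1 < q) :
    ∑' n : {k : ℕ // 2 ≤ k},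
        ((n : ℕ) : ℝ)⁻¹ * (Real.log m / Real.log (n : ℕ)) ^ (1/q)
          * (Real.log m + Real.log (n : ℕ))⁻¹
      ≤ π / Real.sin (π / q) := by
  have hq0 : 0 < q := by linarith
  have hs0 : 0 < 1/q := by positivity
  have hs1 : 1/q < 1 := by rw [div_lt_one hq0]; exact hq
  set s : ℝ := 1/q with hsdef
  set c : ℝ := Real.log m with hcdef
  have hc : 0 < c := Real.log_pos (by exact_mod_cast lt_of_lt_of_le one_lt_two hm)
  set h : ℝ → ℝ := fun x => x ^ (-s) * (1+x)⁻¹ with hhdef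
  have hh_nonneg : ∀ x : ℝ, 0 ≤ x → 0 ≤ h x := fun x hx => by
    simp only [hhdef]
    positivity
  have h_anti : ∀ x y : ℝ, 0 < x → x ≤ y → h y ≤ h x := by
    intro x y hx hxy
    have hy : 0 < y := lt_of_lt_of_le hx hxy
    exact mul_le_mul (Real.rpow_le_rpow_of_nonpos hx hxy (neg_nonpos.mpr hs0.le))
      (inv_anti₀ (by linarith) (by linarith)) (by positivity) (Real.rpow_nonneg hx.le _)
  set F : ℕ → ℝ := fun n =>
    ((n : ℕ) : ℝ)⁻¹ * (c / Real.log n) ^ s * (c + Real.log n)⁻¹ with hFdef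
  set a : ℕ → ℝ := fun i => Real.log ((i : ℝ) + 1) / c with hadef
  have ha0 : a 0 = 0 := by simp [hadef]
  have ha_nonneg : ∀ i, 0 ≤ a i := by
    intro i
    apply div_nonneg _ hc.le
    apply Real.log_nonneg
    have : (0:ℝ) ≤ (i:ℝ) := Nat.cast_nonneg i
    linarith
  have ha_mono : ∀ i, a i < a (i+1) := by
    intro i
    simp only [hadef]
    apply div_lt_div_of_pos_right _ hc
    apply Real.log_lt_log (by positivity)
    push_cast; linarith
  have ha_pos : ∀ i, 0 < a (i+1) := fun i => lt_of_le_of_lt (ha_nonneg i) (ha_mono i)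
  have hInt : IntegrableOn h (Ioi 0) := h_integrable hs0 hs1
  have hIntIoc : ∀ i : ℕ, IntegrableOn h (Ioc (a i) (a (i+1))) := by
    intro i
    apply hInt.mono_set
    intro x hx
    exact lt_of_le_of_lt (ha_nonneg i) hx.1
  have hint_i : ∀ i : ℕ, IntervalIntegrable h volume (a i) (a (i+1)) := by
    intro i
    rw [intervalIntegrable_iff_integrableOn_Ioc_of_le (ha_mono i).le]
    exact hIntIoc i
  -- key per-term bound
  have hkey : ∀ i : ℕ, F (2 + i) ≤ ∫ x in a i..a (i+1), h x := by
    intro i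
    have hlog2 : (0:ℝ) < Real.log ((2 + i : ℕ) : ℝ) := by
      apply Real.log_pos; push_cast; linarith [Nat.cast_nonneg (α := ℝ) i]
    have hn : (0:ℝ) < ((2 + i : ℕ) : ℝ) := by positivity
    have haval : a (i+1) = Real.log ((2 + i : ℕ) : ℝ) / c := by
      simp only [hadef]; norm_num; ring_nf
    -- rewrite F
    have hF_eq : F (2 + i) = h (a (i+1)) * (((2 + i : ℕ) : ℝ) * c)⁻¹ := by
      simp only [hFdef, hhdef, haval]
      have e : (c / Real.log ((2 + i : ℕ) : ℝ)) ^ s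
          = (Real.log ((2 + i : ℕ) : ℝ) / c) ^ (-s) := by
        rw [Real.rpow_neg (by positivity), ← Real.inv_rpow (by positivity), inv_div]
      rw [e]
      have hcne : c ≠ 0 := hc.ne'
      have hnne : ((2 + i : ℕ) : ℝ) ≠ 0 := hn.ne'
      have hlne : Real.log ((2 + i : ℕ) : ℝ) ≠ 0 := hlog2.ne'
      have hclne : c + Real.log ((2 + i : ℕ) : ℝ) ≠ 0 := by positivity
      set L := Real.log ((2 + i : ℕ) : ℝ) with hLdef
      have e2 : (1 + L / c)⁻¹ = c * (c + L)⁻¹ := by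
        rw [show 1 + L / c = (c + L) / c by field_simp, inv_div, div_eq_mul_inv, mul_comm]
      rw [e2, mul_inv]
      have hcc : c * c⁻¹ = 1 := mul_inv_cancel₀ hcne
      linear_combination (-(((L / c) ^ (-s)) * (c + L)⁻¹ * (((2 + i : ℕ) : ℝ))⁻¹)) * hcc
    -- step 1: (n c)⁻¹ ≤ a (i+1) - a i
    have hstep1 : (((2 + i : ℕ) : ℝ) * c)⁻¹ ≤ a (i+1) - a i := by
      have h1 : (0:ℝ) < (i:ℝ) + 1 := by positivity
      have h2 : (0:ℝ) < (i:ℝ) + 2 := by positivity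
      have hl := Real.log_le_sub_one_of_pos (show (0:ℝ) < ((i:ℝ)+1)/((i:ℝ)+2) by positivity)
      rw [Real.log_div (by positivity) (by positivity)] at hl
      have hlb : 1/((i:ℝ)+2) ≤ Real.log ((i:ℝ)+2) - Real.log ((i:ℝ)+1) := by
        have : ((i:ℝ)+1)/((i:ℝ)+2) - 1 = -(1/((i:ℝ)+2)) := by
          field_simp
          norm_num
        linarith
      have hav : a (i+1) - a i = (Real.log ((i:ℝ)+2) - Real.log ((i:ℝ)+1)) / c := by
        simp only [hadef]; push_cast; ring
      have hncast : ((2 + i : ℕ) : ℝ) = (i:ℝ) + 2 := by push_cast; ring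
      rw [hav, hncast]
      calc (((i:ℝ)+2) * c)⁻¹ = (((i:ℝ)+2))⁻¹ / c := by rw [mul_inv]; ring
        _ ≤ (Real.log ((i:ℝ)+2) - Real.log ((i:ℝ)+1)) / c := by
            gcongr
            rwa [inv_eq_one_div]
    -- step 2: constant lower bound for the integral
    have hstep2 : h (a (i+1)) * (a (i+1) - a i) ≤ ∫ x in a i..a (i+1), h x := by
      rw [intervalIntegral.integral_of_le (ha_mono i).le]
      have hconst : h (a (i+1)) * (a (i+1) - a i)
          = ∫ _ in Ioc (a i) (a (i+1)), h (a (i+1)) := by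
        rw [setIntegral_const, Real.volume_real_Ioc_of_le (ha_mono i).le,
          smul_eq_mul, mul_comm]
      rw [hconst]
      apply setIntegral_mono_on ?_ (hIntIoc i) measurableSet_Ioc ?_
      · exact integrableOn_const (by rw [Real.volume_Ioc]; exact ENNReal.ofReal_ne_top)
      · intro x hx
        exact h_anti x (a (i+1)) (lt_of_le_of_lt (ha_nonneg i) hx.1) hx.2
    calc F (2 + i) = h (a (i+1)) * (((2 + i : ℕ) : ℝ) * c)⁻¹ := hF_eq
      _ ≤ h (a (i+1)) * (a (i+1) - a i) :=
          mul_le_mul_of_nonneg_left hstep1 (hh_nonneg _ (ha_pos i).le)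
      _ ≤ _ := hstep2
  -- RHS positivity
  have hsin : 0 < Real.sin (π / q) :=
    Real.sin_pos_of_pos_of_lt_pi (by positivity) (div_lt_self pi_pos hq)
  have hRHS : (0:ℝ) ≤ π / Real.sin (π / q) := le_of_lt (by positivity)
  -- partial sums bound
  apply tsum_le_of_sum_le'  hRHS
  intro u
  classical
  have hsum_eq : ∑ n ∈ u, F (n : ℕ)
      = ∑ j ∈ u.image (fun n : {k : ℕ // 2 ≤ k} => (n : ℕ)), F j := by
    rw [Finset.sum_image]
    intro x _ y _ hxy
    exact Subtype.ext hxy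
  set t := u.image (fun n : {k : ℕ // 2 ≤ k} => (n : ℕ)) with htdef
  set N := t.sup id with hNdef
  have hsub : t ⊆ Finset.Ico 2 (N + 1) := by
    intro j hj
    rw [Finset.mem_Ico]
    constructor
    · rw [htdef, Finset.mem_image] at hj
      obtain ⟨n, _, rfl⟩ := hj
      exact n.2
    · exact Nat.lt_succ_of_le (Finset.le_sup (f := id) hj)
  have hFnonneg : ∀ j : ℕ, 0 ≤ F j := by
    intro j
    simp only [hFdef]
    have hlj : 0 ≤ Real.log (j:ℝ) := by
      rcases Nat.eq_zero_or_pos j with hj | hj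
      · simp [hj]
      · apply Real.log_nonneg
        exact_mod_cast hj
    apply mul_nonneg (mul_nonneg (inv_nonneg.mpr (Nat.cast_nonneg j))
      (Real.rpow_nonneg (div_nonneg hc.le hlj) _)) (inv_nonneg.mpr (by linarith))
  have hchain : ∑ j ∈ Finset.Ico 2 (N+1), F j ≤ π / Real.sin (π / q) := by
    rw [Finset.sum_Ico_eq_sum_range]
    calc ∑ i ∈ Finset.range (N + 1 - 2), F (2 + i)
        ≤ ∑ i ∈ Finset.range (N + 1 - 2), ∫ x in a i..a (i+1), h x :=
          Finset.sum_le_sum fun i _ => hkey i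
      _ = ∫ x in (a 0)..(a (N + 1 - 2)), h x :=
          intervalIntegral.sum_integral_adjacent_intervals fun i _ => hint_i i
      _ ≤ π / Real.sin (π / q) := by
          rw [ha0, intervalIntegral.integral_of_le (ha_nonneg _)]
          have : ∫ x in Ioc (0:ℝ) (a (N + 1 - 2)), h x ≤ ∫ x in Ioi (0:ℝ), h x := by
            apply setIntegral_mono_set hInt ?_ (HasSubset.Subset.eventuallyLE Ioc_subset_Ioi_self)
            filter_upwards [ae_restrict_mem measurableSet_Ioi] with x hx
            exact hh_nonneg x (le_of_lt hx)
          refine this.trans ?_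
          rw [hhdef, h_integral hs0 hs1]
          rw [mul_one_div]
  calc ∑ n ∈ u, F (n : ℕ) = ∑ j ∈ t, F j := hsum_eq
    _ ≤ ∑ j ∈ Finset.Ico 2 (N+1), F j :=
        Finset.sum_le_sum_of_subset_of_nonneg hsub fun j _ _ => hFnonneg j
    _ ≤ π / Real.sin (π / q) := hchain
end

section
/- For every nonzero sequence (a_n)_{n≥2} ∈ ℓ², the quadratic form of the multiplicative Hilbert matrix satisfies a strict inequality: ∑_{m,n≥2} a_m conj(a_n)/(√(mn) log(mn)) < π ∑_{n≥2}|a_n|². In particular π is not an eigenvalue of the multiplicative Hilbert matrix. -/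
open Real


noncomputable def fr (c t : ℝ) : ℝ :=
  Real.sqrt c / (t * Real.sqrt (Real.log t) * (c + Real.log t))

lemma fr_nonneg {c : ℝ} (hc : 0 ≤ c) (n : ℕ) : 0 ≤ fr c n := by
  apply div_nonneg (Real.sqrt_nonneg _)
  have h1 : 0 ≤ Real.log n := by
    rcases Nat.lt_or_ge n 1 with h | h
    · interval_cases n; simp
    · exact Real.log_natCast_nonneg n
  positivity

lemma fr_antitone {c : ℝ} (hc : 0 < c) : AntitoneOn (fr c) (Set.Ici 2) := by
  intro s hs t ht hst
  simp only [Set.mem_Ici] at hs ht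
  have hs0 : (0:ℝ) < s := by linarith
  have hls : 0 < Real.log s := Real.log_pos (by linarith)
  have hlst : Real.log s ≤ Real.log t := Real.log_le_log hs0 hst
  have h1 : 0 < s * Real.sqrt (Real.log s) * (c + Real.log s) := by positivity
  apply div_le_div_of_nonneg_left (Real.sqrt_nonneg c) h1
  gcongr

lemma fr_hasDeriv {c : ℝ} (hc : 0 < c) {t : ℝ} (ht : 2 ≤ t) :
    HasDerivAt (fun t => 2 * Real.arctan (Real.sqrt (Real.log t / c))) (fr c t) t := by
  have ht0 : 0 < t := by linarith
  have hlt : 0 < Real.log t := Real.log_pos (by linarith)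
  have hu : 0 < Real.log t / c := by positivity
  have h1 : HasDerivAt (fun t => Real.log t / c) (t⁻¹ / c) t :=
    (Real.hasDerivAt_log ht0.ne').div_const c
  have h2 : HasDerivAt (fun t => Real.sqrt (Real.log t / c))
      (1 / (2 * Real.sqrt (Real.log t / c)) * (t⁻¹ / c)) t :=
    (Real.hasDerivAt_sqrt hu.ne').comp t h1
  have h3 := ((Real.hasDerivAt_arctan (Real.sqrt (Real.log t / c))).comp t h2).const_mul 2
  refine h3.congr_deriv ?_
  symm
  have hs : Real.sqrt (Real.log t / c) ^ 2 = Real.log t / c := Real.sq_sqrt hu.le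
  have hsd : Real.sqrt (Real.log t / c) = Real.sqrt (Real.log t) / Real.sqrt c := by
    rw [Real.sqrt_div hlt.le]
  have hsl : Real.sqrt (Real.log t) > 0 := Real.sqrt_pos.mpr hlt
  have hsc : Real.sqrt c > 0 := Real.sqrt_pos.mpr hc
  have hcl : Real.sqrt c * Real.sqrt c = c := Real.mul_self_sqrt hc.le
  have hll : Real.sqrt (Real.log t) * Real.sqrt (Real.log t) = Real.log t :=
    Real.mul_self_sqrt hlt.le
  rw [fr, hs, hsd]
  have hcL : 0 < c + Real.log t := by linarith
  field_simp



lemma aux_arctan {s : ℝ} (hs : 0 < s) : s / (1 + s ^ 2) < Real.arctan s := by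
  have key : StrictMonoOn (fun x : ℝ => Real.arctan x - x / (1 + x ^ 2)) (Set.Ici 0) := by
    apply strictMonoOn_of_deriv_pos (convex_Ici 0)
    · apply Continuous.continuousOn
      apply Real.continuous_arctan.sub
      exact continuous_id.div (by continuity) (fun x => by positivity)
    · intro x hx
      rw [interior_Ici] at hx
      have h1 : (0:ℝ) < 1 + x ^ 2 := by positivity
      have h2 : HasDerivAt (fun x : ℝ => x / (1 + x ^ 2))
          ((1 * (1 + x^2) - x * (2*x^1)) / (1 + x^2)^2) x :=
        (hasDerivAt_id x).div ((hasDerivAt_pow 2 x).const_add 1) h1.ne'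
      have hd : HasDerivAt (fun x : ℝ => Real.arctan x - x / (1 + x ^ 2))
          (2 * x ^ 2 / (1 + x ^ 2) ^ 2) x := by
        have := (Real.hasDerivAt_arctan x).sub h2
        refine this.congr_deriv ?_
        symm
        field_simp
        ring
      rw [hd.deriv]
      have hx0 : x ≠ 0 := ne_of_gt hx
      positivity
  have h := key Set.self_mem_Ici (Set.mem_Ici.mpr hs.le) hs
  simpa using h

lemma fr_zero (c : ℝ) : fr c 0 = 0 := by simp [fr]
lemma fr_one (c : ℝ) : fr c 1 = 0 := by simp [fr]

lemma fr_integral {c : ℝ} (hc : 0 < c) (k : ℕ) :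
    ∫ t in (2:ℝ)..(2 + k : ℝ), fr c t
      = 2 * Real.arctan (Real.sqrt (Real.log (2 + k) / c))
        - 2 * Real.arctan (Real.sqrt (Real.log 2 / c)) := by
  have h2k : (2:ℝ) ≤ 2 + k := le_add_of_nonneg_right (Nat.cast_nonneg k)
  have hlogcont : ContinuousOn Real.log (Set.Icc (2:ℝ) (2 + k)) := by
    apply ContinuousOn.mono Real.continuousOn_log
    intro x hx
    have h2x : (2:ℝ) ≤ x := hx.1
    simp only [Set.mem_compl_iff, Set.mem_singleton_iff]
    intro h
    rw [h] at h2x; norm_num at h2x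
  apply intervalIntegral.integral_eq_sub_of_hasDerivAt
    (f := fun t : ℝ => 2 * Real.arctan (Real.sqrt (Real.log t / c)))
  · intro x hx
    rw [Set.uIcc_of_le h2k] at hx
    exact fr_hasDeriv hc hx.1
  · apply ContinuousOn.intervalIntegrable
    rw [Set.uIcc_of_le h2k]
    apply ContinuousOn.div continuousOn_const
    · exact (continuousOn_id.mul (Real.continuous_sqrt.comp_continuousOn hlogcont)).mul
        (continuousOn_const.add hlogcont)
    · intro x hx
      have hx2 : (2:ℝ) ≤ x := hx.1
      have hlx : 0 < Real.log x := Real.log_pos (by linarith)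
      have hx0 : (0:ℝ) < x := by linarith
      have : x * Real.sqrt (Real.log x) * (c + Real.log x) > 0 := by positivity
      intro h; rw [h] at this; norm_num at this

lemma fr_sum_range_le {c : ℝ} (hc : Real.log 2 ≤ c) (N : ℕ) :
    ∑ n ∈ Finset.range N, fr c n
      ≤ fr c 2 + (π - 2 * Real.arctan (Real.sqrt (Real.log 2 / c))) := by
  have hl2 : (0:ℝ) < Real.log 2 := Real.log_pos (by norm_num)
  have hc0 : 0 < c := lt_of_lt_of_le hl2 hc
  have hrest : 0 ≤ π - 2 * Real.arctan (Real.sqrt (Real.log 2 / c)) := by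
    have := Real.arctan_lt_pi_div_two (Real.sqrt (Real.log 2 / c)); linarith
  have h2 : 0 ≤ fr c 2 := by
    have := fr_nonneg hc0.le (c := c) 2; push_cast at this; exact this
  rcases Nat.lt_or_ge N 3 with hN | hN
  · interval_cases N <;>
      simp [Finset.sum_range_succ, fr_zero, fr_one] <;> linarith
  · obtain ⟨k, rfl⟩ : ∃ k, N = 3 + k := ⟨N - 3, by omega⟩
    rw [Finset.sum_range_add]
    have h012 : ∑ n ∈ Finset.range 3, fr c n = fr c 2 := by
      norm_num [Finset.sum_range_succ, fr_zero, fr_one]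
    rw [h012]
    gcongr
    calc ∑ i ∈ Finset.range k, fr c ((3 + i : ℕ) : ℝ)
        = ∑ i ∈ Finset.range k, fr c ((2:ℝ) + ((i + 1 : ℕ) : ℝ)) := by
          apply Finset.sum_congr rfl; intro i _; congr 1; push_cast; ring
      _ ≤ ∫ t in (2:ℝ)..((2:ℝ) + k), fr c t := by
          apply AntitoneOn.sum_le_integral
          apply (fr_antitone hc0).mono
          intro x hx
          exact hx.1
      _ ≤ π - 2 * Real.arctan (Real.sqrt (Real.log 2 / c)) := by
          rw [fr_integral hc0 k]
          have := Real.arctan_lt_pi_div_two (Real.sqrt (Real.log ((2:ℝ) + k) / c))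
          linarith

lemma fr_two_lt {c : ℝ} (hc : Real.log 2 ≤ c) :
    fr c 2 < 2 * Real.arctan (Real.sqrt (Real.log 2 / c)) := by
  have hl2 : (0:ℝ) < Real.log 2 := Real.log_pos (by norm_num)
  have hc0 : 0 < c := lt_of_lt_of_le hl2 hc
  set s := Real.sqrt (Real.log 2 / c) with hs
  have hs0 : 0 < s := Real.sqrt_pos.mpr (by positivity)
  have hs2 : s ^ 2 = Real.log 2 / c := Real.sq_sqrt (by positivity)
  have hfr : fr c 2 = s / (2 * Real.log 2 * (1 + s ^ 2)) := by
    rw [fr, hs2, hs, Real.sqrt_div hl2.le]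
    have hsc : 0 < Real.sqrt c := Real.sqrt_pos.mpr hc0
    have hsl : 0 < Real.sqrt (Real.log 2) := Real.sqrt_pos.mpr hl2
    have hcl : Real.sqrt c * Real.sqrt c = c := Real.mul_self_sqrt hc0.le
    have hll : Real.sqrt (Real.log 2) * Real.sqrt (Real.log 2) = Real.log 2 :=
      Real.mul_self_sqrt hl2.le
    field_simp
    linear_combination (Real.log 2) * hcl
      - c * hll
  have harc := aux_arctan hs0
  have hlog2 : Real.log 2 > 1/4 := by
    have := Real.log_two_gt_d9; linarith
  rw [hfr]
  have h1s : (0:ℝ) < 1 + s ^ 2 := by positivity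
  have key : s / (2 * Real.log 2 * (1 + s ^ 2)) < 2 * (s / (1 + s ^ 2)) := by
    rw [div_lt_iff₀ (by positivity)]
    have heq : 2 * (s / (1 + s ^ 2)) * (2 * Real.log 2 * (1 + s ^ 2))
        = 4 * Real.log 2 * s := by field_simp; ring
    rw [heq]
    nlinarith
  calc s / (2 * Real.log 2 * (1 + s ^ 2)) < 2 * (s / (1 + s ^ 2)) := key
    _ < 2 * Real.arctan s := by linarith

lemma fr_summable {c : ℝ} (hc : Real.log 2 ≤ c) : Summable (fun n : ℕ => fr c n) := by
  have hl2 : (0:ℝ) < Real.log 2 := Real.log_pos (by norm_num)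
  have hc0 : 0 < c := lt_of_lt_of_le hl2 hc
  exact summable_of_sum_range_le (fr_nonneg hc0.le) (fr_sum_range_le hc)

lemma fr_tsum_lt {c : ℝ} (hc : Real.log 2 ≤ c) : ∑' n : ℕ, fr c n < π := by
  have hl2 : (0:ℝ) < Real.log 2 := Real.log_pos (by norm_num)
  have hc0 : 0 < c := lt_of_lt_of_le hl2 hc
  have hle := Real.tsum_le_of_sum_range_le (fr_nonneg hc0.le) (fr_sum_range_le hc)
  have := fr_two_lt hc
  linarith

noncomputable def UU (m n : ℕ) : ℝ := fr (Real.log m) n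

lemma UU_nonneg (m n : ℕ) : 0 ≤ UU m n := by
  apply fr_nonneg _ n
  rcases Nat.lt_or_ge m 1 with h | h
  · interval_cases m; simp
  · exact Real.log_natCast_nonneg m

lemma UU_zero {m : ℕ} (hm : m < 2) (n : ℕ) : UU m n = 0 := by
  interval_cases m <;> simp [UU, fr]

lemma log_nat_ge {m : ℕ} (hm : 2 ≤ m) : Real.log 2 ≤ Real.log m :=
  Real.log_le_log (by norm_num) (by exact_mod_cast hm)

lemma UU_summable (m : ℕ) : Summable (fun n => UU m n) := by
  rcases Nat.lt_or_ge m 2 with h | h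
  · simpa [UU_zero h] using summable_zero
  · exact fr_summable (log_nat_ge h)

lemma UU_tsum_le (m : ℕ) : ∑' n, UU m n ≤ π := by
  rcases Nat.lt_or_ge m 2 with h | h
  · simp [UU_zero h]; exact Real.pi_pos.le
  · exact (fr_tsum_lt (log_nat_ge h)).le

lemma UU_tsum_lt {m : ℕ} (hm : 2 ≤ m) : ∑' n, UU m n < π :=
  fr_tsum_lt (log_nat_ge hm)

-- AM-GM key bound
lemma key_bound {m n : ℕ} (hm : 2 ≤ m) (hn : 2 ≤ n) (x y : ℝ) (hx : 0 ≤ x) (hy : 0 ≤ y) :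
    x * y / (Real.sqrt ((m : ℝ) * n) * Real.log ((m : ℝ) * n))
      ≤ (x ^ 2 * UU m n + y ^ 2 * UU n m) / 2 := by
  have hm1 : (1:ℝ) < m := by exact_mod_cast Nat.lt_of_lt_of_le one_lt_two hm
  have hn1 : (1:ℝ) < n := by exact_mod_cast Nat.lt_of_lt_of_le one_lt_two hn
  have hm0 : (0:ℝ) < m := by linarith
  have hn0 : (0:ℝ) < n := by linarith
  have hlm : 0 < Real.log m := Real.log_pos hm1
  have hln : 0 < Real.log n := Real.log_pos hn1
  have hlmn : Real.log ((m:ℝ) * n) = Real.log m + Real.log n :=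
    Real.log_mul hm0.ne' hn0.ne'
  have hu : 0 < UU m n := by
    apply div_pos (Real.sqrt_pos.mpr hlm); positivity
  have hv : 0 < UU n m := by
    apply div_pos (Real.sqrt_pos.mpr hln); positivity
  have hd : 0 < Real.sqrt ((m:ℝ) * n) * Real.log ((m:ℝ) * n) := by
    rw [hlmn]; positivity
  have huv : UU m n * UU n m * (Real.sqrt ((m : ℝ) * n) * Real.log ((m : ℝ) * n)) ^ 2 = 1 := by
    have h1 : Real.sqrt ((m:ℝ) * n) ^ 2 = (m:ℝ) * n := Real.sq_sqrt (by positivity)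
    have h2 : Real.sqrt (Real.log m) * Real.sqrt (Real.log m) = Real.log m :=
      Real.mul_self_sqrt hlm.le
    have h3 : Real.sqrt (Real.log n) * Real.sqrt (Real.log n) = Real.log n :=
      Real.mul_self_sqrt hln.le
    rw [UU, UU, fr, fr, hlmn, mul_pow, h1]
    field_simp
    nlinarith [h2, h3, hlm, hln, hm0, hn0]
  -- from huv : 1/d = sqrt(uv)
  have hsqrt : x * y / (Real.sqrt ((m : ℝ) * n) * Real.log ((m : ℝ) * n))
      = x * y * (Real.sqrt (UU m n) * Real.sqrt (UU n m)) := by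
    rw [← Real.sqrt_mul hu.le]
    have : UU m n * UU n m = (1 / (Real.sqrt ((m : ℝ) * n) * Real.log ((m : ℝ) * n))) ^ 2 := by
      rw [div_pow, one_pow, eq_div_iff (pow_ne_zero 2 hd.ne')]
      exact huv
    rw [this, Real.sqrt_sq (by positivity)]
    ring
  rw [hsqrt]
  have hamgm : 0 ≤ (x * Real.sqrt (UU m n) - y * Real.sqrt (UU n m)) ^ 2 := sq_nonneg _
  have h2 : Real.sqrt (UU m n) ^ 2 = UU m n := Real.sq_sqrt hu.le
  have h3 : Real.sqrt (UU n m) ^ 2 = UU n m := Real.sq_sqrt hv.le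
  nlinarith [hamgm, h2, h3, mul_nonneg hx hy]

lemma G1_summable (a : ℕ → ℂ) (ha : Summable fun n => ‖a n‖ ^ 2) :
    Summable (fun p : ℕ × ℕ => ‖a p.1‖ ^ 2 * UU p.1 p.2) := by
  rw [summable_prod_of_nonneg (fun p => mul_nonneg (by positivity) (UU_nonneg p.1 p.2))]
  constructor
  · intro m
    show Summable fun n => ‖a m‖ ^ 2 * UU m n
    exact (UU_summable m).mul_left _
  · apply Summable.of_nonneg_of_le ?_ ?_ (ha.mul_left π)
    · intro m
      apply tsum_nonneg
      intro n
      exact mul_nonneg (by positivity) (UU_nonneg m n)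
    · intro m
      show ∑' n, ‖a m‖ ^ 2 * UU m n ≤ π * ‖a m‖ ^ 2
      have h1 : ∑' n, ‖a m‖ ^ 2 * UU m n = ‖a m‖ ^ 2 * ∑' n, UU m n := tsum_mul_left
      simp only [h1, mul_comm π _]
      exact mul_le_mul_of_nonneg_left (UU_tsum_le m) (by positivity)

theorem stmt_16 (a : ℕ → ℂ) (ha0 : ∀ n < 2, a n = 0)
    (ha : Summable fun n => ‖a n‖ ^ 2) (hne : a ≠ 0) :
    (∑' m : ℕ, ∑' n : ℕ,
        a m * (starRingEnd ℂ) (a n)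
          / ((Real.sqrt ((m : ℝ) * n) * Real.log ((m : ℝ) * n) : ℝ) : ℂ)).re
      < π * ∑' n : ℕ, ‖a n‖ ^ 2 := by
  set F : ℕ × ℕ → ℂ := fun p =>
    a p.1 * (starRingEnd ℂ) (a p.2)
      / ((Real.sqrt ((p.1 : ℝ) * p.2) * Real.log ((p.1 : ℝ) * p.2) : ℝ) : ℂ) with hF
  set G1 : ℕ × ℕ → ℝ := fun p => ‖a p.1‖ ^ 2 * UU p.1 p.2 with hG1def
  set G2 : ℕ × ℕ → ℝ := fun p => ‖a p.2‖ ^ 2 * UU p.2 p.1 with hG2def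
  set G : ℕ × ℕ → ℝ := fun p => (G1 p + G2 p) / 2 with hGdef
  have hGnn : ∀ p, 0 ≤ G p := by
    intro p
    have := UU_nonneg p.1 p.2
    have := UU_nonneg p.2 p.1
    have : 0 ≤ G1 p := mul_nonneg (by positivity) (UU_nonneg p.1 p.2)
    have : 0 ≤ G2 p := mul_nonneg (by positivity) (UU_nonneg p.2 p.1)
    simp only [hGdef]
    positivity
  -- pointwise bound
  have hbound : ∀ p : ℕ × ℕ, ‖F p‖ ≤ G p := by
    rintro ⟨m, n⟩
    rcases Nat.lt_or_ge m 2 with hm | hm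
    · simp [hF, ha0 m hm]
      exact hGnn _
    rcases Nat.lt_or_ge n 2 with hn | hn
    · simp [hF, ha0 n hn]
      exact hGnn _
    have hm0 : (0:ℝ) < m := by exact_mod_cast Nat.lt_of_lt_of_le Nat.zero_lt_two hm
    have hn0 : (0:ℝ) < n := by exact_mod_cast Nat.lt_of_lt_of_le Nat.zero_lt_two hn
    have hlmn : Real.log ((m:ℝ) * n) = Real.log m + Real.log n :=
      Real.log_mul hm0.ne' hn0.ne'
    have hlm : 0 < Real.log m := Real.log_pos (by exact_mod_cast Nat.lt_of_lt_of_le one_lt_two hm)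
    have hln : 0 < Real.log n := Real.log_pos (by exact_mod_cast Nat.lt_of_lt_of_le one_lt_two hn)
    have hd : 0 < Real.sqrt ((m:ℝ) * n) * Real.log ((m:ℝ) * n) := by
      rw [hlmn]; positivity
    have hnorm : ‖F (m, n)‖ = ‖a m‖ * ‖a n‖ / (Real.sqrt ((m:ℝ) * n) * Real.log ((m:ℝ) * n)) := by
      show ‖a m * (starRingEnd ℂ) (a n) / ((Real.sqrt ((m:ℝ) * n) * Real.log ((m:ℝ) * n) : ℝ) : ℂ)‖ = _
      rw [norm_div, norm_mul, RCLike.norm_conj, Complex.norm_real, Real.norm_eq_abs,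
        abs_of_nonneg hd.le]
    rw [hnorm]
    exact key_bound hm hn _ _ (norm_nonneg _) (norm_nonneg _)
  -- summability of G1
  have hG1 : Summable G1 := G1_summable a ha
  have hG2 : Summable G2 := ((Equiv.prodComm ℕ ℕ).summable_iff).2 hG1
  have hG : Summable G := (hG1.add hG2).div_const 2
  have hFnorm : Summable (fun p => ‖F p‖) :=
    Summable.of_nonneg_of_le (fun p => norm_nonneg _) hbound hG
  have hFsum : Summable F := hFnorm.of_norm
  have hFre : Summable (fun p => (F p).re) := by
    apply Summable.of_norm
    apply Summable.of_nonneg_of_le (fun p => norm_nonneg _) _ hFnorm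
    intro p
    exact (Complex.abs_re_le_norm (F p)).trans_eq rfl
  -- rewrite double sum
  have hrw : (∑' m : ℕ, ∑' n : ℕ, F (m, n)) = ∑' p : ℕ × ℕ, F p := (hFsum.tsum_prod).symm
  have hre : (∑' p : ℕ × ℕ, F p).re = ∑' p : ℕ × ℕ, (F p).re := Complex.re_tsum hFsum
  have hstep1 : ∑' p : ℕ × ℕ, (F p).re ≤ ∑' p, G p := by
    apply Summable.tsum_le_tsum _ hFre hG
    intro p
    calc (F p).re ≤ ‖F p‖ := Complex.re_le_norm (F p)
      _ ≤ G p := hbound p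
  have hswap : ∑' p : ℕ × ℕ, G2 p = ∑' p : ℕ × ℕ, G1 p := (Equiv.prodComm ℕ ℕ).tsum_eq G1
  have hGsum : ∑' p, G p = ∑' p, G1 p := by
    rw [hGdef]
    simp only
    rw [tsum_div_const, hG1.tsum_add hG2, hswap]
    ring
  have hG1sum : ∑' p : ℕ × ℕ, G1 p = ∑' m : ℕ, ‖a m‖ ^ 2 * ∑' n, UU m n := by
    rw [hG1.tsum_prod]
    refine tsum_congr fun m => ?_
    show ∑' n, ‖a m‖ ^ 2 * UU m n = _
    exact tsum_mul_left
  -- final strict comparison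
  obtain ⟨m₀, hm₀⟩ : ∃ m, a m ≠ 0 := Function.ne_iff.mp hne
  have hm₀2 : 2 ≤ m₀ := by
    by_contra h
    exact hm₀ (ha0 m₀ (by omega))
  have hfin : ∑' m : ℕ, ‖a m‖ ^ 2 * ∑' n, UU m n < ∑' m : ℕ, π * ‖a m‖ ^ 2 := by
    apply Summable.tsum_lt_tsum_of_nonneg (i := m₀)
    · intro m
      exact mul_nonneg (by positivity) (tsum_nonneg fun n => UU_nonneg m n)
    · intro m
      rw [mul_comm π _]
      exact mul_le_mul_of_nonneg_left (UU_tsum_le m) (by positivity)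
    · rw [mul_comm π _]
      have h0 : 0 < ‖a m₀‖ ^ 2 := by
        have : ‖a m₀‖ > 0 := norm_pos_iff.mpr hm₀
        positivity
      exact mul_lt_mul_of_pos_left (UU_tsum_lt hm₀2) h0
    · exact ha.mul_left π
  have hrhs : ∑' m : ℕ, π * ‖a m‖ ^ 2 = π * ∑' n : ℕ, ‖a n‖ ^ 2 := tsum_mul_left
  calc (∑' m : ℕ, ∑' n : ℕ, F (m, n)).re
      = ∑' p : ℕ × ℕ, (F p).re := by rw [hrw, hre]
    _ ≤ ∑' p, G p := hstep1
    _ = ∑' m : ℕ, ‖a m‖ ^ 2 * ∑' n, UU m n := by rw [hGsum, hG1sum]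
    _ < ∑' m : ℕ, π * ‖a m‖ ^ 2 := hfin
    _ = π * ∑' n : ℕ, ‖a n‖ ^ 2 := hrhs
end
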